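/- Let K be a field of characteristic p > 0, G a finite group, and C a right ideal of KG that is not self-orthogonal (C \not\subseteq C^\perp). Then the Schur product C * C has a direct summand (as KG-module) isomorphic to the projective cover P_0 of the trivial KG-module; in particular, the largest power of p dividing |G| is at most dim_K(C * C). -/

import Mathlib

open MonoidAlgebra

attribute [local instance] Classical.propDecidable

/-- Coefficientwise (Schur) product on the group algebra. -/
noncomputable def schur {K G : Type*} [Semiring K] (f g : MonoidAlgebra K G) :
    MonoidAlgebra K G :=
  MonoidAlgebra.ofCoeff (Finsupp.zipWith (· * ·) (mul_zero 0) f.coeff g.coeff)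

/-- `C` is a right ideal of the group algebra. -/
def IsRightIdeal {K G : Type*} [Field K] [Group G]
    (C : Submodule K (MonoidAlgebra K G)) : Prop :=
  ∀ c ∈ C, ∀ v : MonoidAlgebra K G, c * v ∈ C

open MulOpposite Polynomial
set_option linter.unusedSectionVars false
set_option linter.unusedVariables false
set_option maxHeartbeats 1000000
set_option synthInstance.maxHeartbeats 400000

noncomputable def zmodMod (p : ℕ) (M : Type*) [AddCommGroup M] (Kk : Type*) [Field Kk] [CharP Kk p]
    [Module Kk M] : Module (ZMod p) M :=
  AddCommGroup.zmodModule (by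
    intro y
    rw [← Nat.cast_smul_eq_nsmul Kk p y, CharP.cast_eq_zero Kk p, zero_smul])


section Setup
variable {K G : Type*} [Field K] [Group G] [Fintype G]

local notation "A" => MonoidAlgebra K G

noncomputable def eps : MonoidAlgebra K G →ₐ[K] K := MonoidAlgebra.lift K K G 1

noncomputable instance : FiniteDimensional K (MonoidAlgebra K G) :=
  Module.Finite.of_basis (MonoidAlgebra.basis G K)

instance : IsScalarTower K (MonoidAlgebra K G)ᵐᵒᵖ (MonoidAlgebra K G) := by
  constructor
  intro c a x
  induction a using MulOpposite.rec' with
  | h a =>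
    rw [op_smul_eq_mul, show c • op a = op (c • a) from rfl, op_smul_eq_mul, mul_smul_comm]

lemma ksmul_mem (S : Submodule (MonoidAlgebra K G)ᵐᵒᵖ (MonoidAlgebra K G)) (c : K) {x : A}
    (h : x ∈ S) : c • x ∈ S := by
  have : c • x = op (c • (1:A)) • x := by
    rw [op_smul_eq_mul, mul_smul_comm, mul_one]
  rw [this]
  exact S.smul_mem _ h

lemma eps_apply' (x : A) : eps x = ∑ g : G, x.coeff g := by
  rw [eps, MonoidAlgebra.lift_apply, Finsupp.sum_fintype]
  · simp
  · intro g; simp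

noncomputable def tG : MonoidAlgebra K G := ∑ g : G, MonoidAlgebra.of K G g

lemma tG_apply (g : G) : (tG : A).coeff g = 1 := by
  rw [tG, MonoidAlgebra.coeff_sum, Finsupp.finset_sum_apply]
  rw [Finset.sum_eq_single g]
  · simp [MonoidAlgebra.of_apply, Finsupp.single_apply]
  · intro g' _ hne
    simp [MonoidAlgebra.of_apply, Finsupp.single_apply, hne]
  · intro h; exact absurd (Finset.mem_univ _) h

lemma tG_ne_zero : (tG : A) ≠ 0 := by
  intro h
  have := congrArg (fun z : A => z.coeff 1) h
  simp [tG_apply] at this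

lemma tG_mul (a : A) : (tG : A) * a = eps a • tG := by
  apply MonoidAlgebra.ext; apply Finsupp.ext
  intro g
  have h1 : ((tG : A) * a).coeff g = ∑ g' : G, a.coeff (g'⁻¹ * g) := by
    rw [tG, Finset.sum_mul, MonoidAlgebra.coeff_sum, Finsupp.finset_sum_apply]
    apply Finset.sum_congr rfl
    intro g' _
    rw [MonoidAlgebra.of_apply, MonoidAlgebra.coeff_single_mul_apply, one_mul]
  rw [h1, MonoidAlgebra.coeff_smul_apply, tG_apply, smul_eq_mul, mul_one, eps_apply']
  exact Equiv.sum_comp ((Equiv.inv G).trans (Equiv.mulRight g)) (fun z => a.coeff z)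

noncomputable def Lmul (f : A) : MonoidAlgebra K G →ₗ[(MonoidAlgebra K G)ᵐᵒᵖ] MonoidAlgebra K G where
  toFun v := f * v
  map_add' v w := mul_add f v w
  map_smul' r v := by
    show f * (v * unop r) = (f * v) * unop r
    rw [mul_assoc]

@[simp] lemma Lmul_apply (f v : A) : Lmul f v = f * v := rfl

noncomputable def opEquivA : (MonoidAlgebra K G)ᵐᵒᵖ ≃ₗ[(MonoidAlgebra K G)ᵐᵒᵖ]
    MonoidAlgebra K G where
  toFun := unop
  invFun := op
  map_add' _ _ := rfl
  map_smul' _ _ := rfl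
  left_inv _ := rfl
  right_inv _ := rfl

noncomputable instance : Module.Free (MonoidAlgebra K G)ᵐᵒᵖ (MonoidAlgebra K G) :=
  Module.Free.of_equiv (opEquivA (K := K) (G := G))

lemma eps_aeval (x : A) (q : Polynomial K) :
    eps (Polynomial.aeval x q) = q.eval (eps x) := by
  rw [← Polynomial.aeval_algHom_apply, Polynomial.aeval_def, Polynomial.eval₂_eq_eval_map,
    show algebraMap K K = RingHom.id K from rfl, Polynomial.map_id]

/-- L1: a right ideal containing an element of augmentation 1 contains an
idempotent of augmentation 1. -/
lemma exists_idem_aug (N : Submodule (MonoidAlgebra K G)ᵐᵒᵖ (MonoidAlgebra K G)) (x : A)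
    (hx : x ∈ N) (hex : eps x = 1) :
    ∃ e ∈ N, e * e = e ∧ eps e = 1 := by
  have hmem : ∀ y ∈ N, ∀ z : A, y * z ∈ N := by
    intro y hy z
    have : y * z = op z • y := rfl
    rw [this]; exact N.smul_mem _ hy
  obtain ⟨q, hqmonic, hq0⟩ := IsIntegral.of_finite K x
  have hq0' : (Polynomial.aeval x) q = 0 := hq0
  have hqne : q ≠ 0 := hqmonic.ne_zero
  have hq1 : q.eval 1 = 0 := by
    have := congrArg (eps (K:=K) (G:=G)) hq0'
    rwa [map_zero, eps_aeval, hex] at this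
  by_cases hq00 : q.eval 0 = 0
  · -- main case
    set a := rootMultiplicity 1 q with ha
    have hapos : 0 < a := (rootMultiplicity_pos hqne).2 hq1
    set u := q /ₘ (X - Polynomial.C 1) ^ a with hu
    have hfac : (X - Polynomial.C 1) ^ a * u = q := pow_mul_divByMonic_rootMultiplicity_eq q 1
    have hu1 : u.eval 1 ≠ 0 := eval_divByMonic_pow_rootMultiplicity_ne_zero 1 hqne
    have hirr : Irreducible (X - Polynomial.C (1:K)) := irreducible_X_sub_C 1
    have hndvd : ¬ (X - Polynomial.C (1:K)) ∣ u := by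
      rw [dvd_iff_isRoot]; exact hu1
    have hcop : IsCoprime ((X - Polynomial.C (1:K)) ^ a) u :=
      ((hirr.coprime_iff_not_dvd.2 hndvd)).pow_left
    obtain ⟨c, d, hbez⟩ := hcop
    set E := d * u with hE
    have hu0 : u.eval 0 = 0 := by
      have h2 := congrArg (Polynomial.eval 0) hfac
      simp only [eval_mul, eval_pow, eval_sub, eval_X, eval_C, hq00] at h2
      rcases mul_eq_zero.mp h2 with h | h
      · exact absurd h (pow_ne_zero _ (by norm_num))
      · exact h
    have hE0 : E.coeff 0 = 0 := by
      rw [hE, Polynomial.mul_coeff_zero, coeff_zero_eq_eval_zero, coeff_zero_eq_eval_zero,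
        hu0, mul_zero]
    obtain ⟨w, hw⟩ := Polynomial.X_dvd_iff.mpr hE0
    have hErel : E * E - E = -(d*c) * q := by
      linear_combination (d*u) * hbez - (d*c) * hfac
    refine ⟨Polynomial.aeval x E, ?_, ?_, ?_⟩
    · rw [hw, map_mul, Polynomial.aeval_X]
      exact hmem x hx _
    · have h3 := congrArg (Polynomial.aeval x) hErel
      rw [map_mul, hq0', mul_zero, map_sub, map_mul] at h3
      exact sub_eq_zero.mp h3
    · rw [eps_aeval, hex]
      have h4 := congrArg (Polynomial.eval 1) hbez
      simp only [eval_add, eval_mul, eval_pow, eval_sub, eval_X, eval_C, sub_self,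
        zero_pow hapos.ne', mul_zero, zero_add, eval_one] at h4
      simpa [hE] using h4
  · -- x is invertible, so 1 ∈ N
    have hXd : X ∣ (q - Polynomial.C (q.eval 0)) := by
      rw [Polynomial.X_dvd_iff]
      simp [coeff_zero_eq_eval_zero]
    obtain ⟨q', hq'⟩ := hXd
    have key : x * ((-(q.eval 0)⁻¹) • Polynomial.aeval x q') = 1 := by
      have h5 : Polynomial.aeval x (q - Polynomial.C (q.eval 0)) = - (algebraMap K A (q.eval 0)) := by
        rw [map_sub, hq0', zero_sub, Polynomial.aeval_C]
      rw [hq', map_mul, Polynomial.aeval_X] at h5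
      rw [mul_smul_comm, h5, Algebra.algebraMap_eq_smul_one]
      rw [neg_smul, smul_neg, neg_neg, smul_smul, inv_mul_cancel₀ hq00, one_smul]
    have h1 : (1:A) ∈ N := key ▸ hmem x hx _
    exact ⟨1, h1, one_mul 1, map_one _⟩


/-- the explicit equivalence `(G ⧸ H) × H ≃ G`. -/
noncomputable def cosetEquiv (H : Subgroup G) : (G ⧸ H) × H ≃ G where
  toFun qh := qh.1.out * ↑qh.2
  invFun g := (QuotientGroup.mk g,
    ⟨(QuotientGroup.mk g : G ⧸ H).out⁻¹ * g, by
      apply QuotientGroup.eq.mp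
      rw [QuotientGroup.out_eq']⟩)
  left_inv := by
    rintro ⟨q, h⟩
    have h1 : (QuotientGroup.mk (q.out * ↑h) : G ⧸ H) = q := by
      rw [QuotientGroup.mk_mul_of_mem _ h.2, QuotientGroup.out_eq']
    refine Prod.ext ?_ ?_
    · exact h1
    · apply Subtype.ext
      simp only [h1]
      group
  right_inv g := by
    simp only []
    rw [mul_inv_cancel_left]

/-- key fixed-point lemma: a nonzero element `b` supported in a `p`-subgroup `H` and
killed by left multiplication by `x` forces `eps x = 0`. -/
lemma eps_eq_zero_of_kill (p : ℕ) [Fact p.Prime] [CharP K p]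
    (H : Subgroup G) (hp : IsPGroup p H) (x b : A)
    (hsupp : ∀ g : G, b.coeff g ≠ 0 → g ∈ H) (hxb : x * b = 0) (hb : b ≠ 0) :
    eps x = 0 := by
  classical
  letI : Module (ZMod p) A := zmodMod p _ K
  set gens : Set A := Set.range (fun h : H => b * MonoidAlgebra.of K G (h : G)) with hgens
  set W : Submodule (ZMod p) A := Submodule.span (ZMod p) gens with hW
  haveI : Module.Finite (ZMod p) ↥W :=
    FiniteDimensional.span_of_finite (ZMod p) (Set.finite_range _)
  haveI : Finite ↥W := Module.finite_of_finite (ZMod p)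
  -- all elements of W are supported in H and killed by x
  have hQ : ∀ a ∈ W, (∀ g : G, a.coeff g ≠ 0 → g ∈ H) ∧ x * a = 0 := by
    have hle : W ≤ AddSubgroup.toZModSubmodule p
        { carrier := {a : A | (∀ g : G, a.coeff g ≠ 0 → g ∈ H) ∧ x * a = 0}
          zero_mem' := ⟨fun g hg => absurd rfl hg, mul_zero x⟩
          add_mem' := by
            rintro a a' ⟨ha1, ha2⟩ ⟨ha1', ha2'⟩
            constructor
            · intro g hg
              rw [MonoidAlgebra.coeff_add, Finsupp.add_apply] at hg
              by_cases h : a.coeff g = 0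
              · exact ha1' g (by rw [h, zero_add] at hg; exact hg)
              · exact ha1 g h
            · rw [mul_add, ha2, ha2', add_zero]
          neg_mem' := by
            rintro a ⟨ha1, ha2⟩
            constructor
            · intro g hg
              apply ha1 g
              rw [MonoidAlgebra.coeff_neg, Finsupp.neg_apply] at hg
              simpa using hg
            · rw [mul_neg, ha2, neg_zero] } := by
      rw [hW]
      apply Submodule.span_le.mpr
      rintro y ⟨h, rfl⟩
      simp only [AddSubgroup.mem_toZModSubmodule]
      constructor
      · intro g hg
        rw [MonoidAlgebra.of_apply, MonoidAlgebra.coeff_mul_single_apply, mul_one] at hg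
        have := hsupp _ hg
        have : g * (↑h)⁻¹ * ↑h ∈ H := H.mul_mem this h.2
        rwa [inv_mul_cancel_right] at this
      · rw [← mul_assoc, hxb, zero_mul]
    intro a ha
    exact hle ha
  -- stability under right multiplication by elements of H
  have stable : ∀ w ∈ W, ∀ h : H, w * MonoidAlgebra.of K G (h : G) ∈ W := by
    intro w hw h
    have hmap : W.map (AddMonoidHom.toZModLinearMap p
        (AddMonoidHom.mulRight (MonoidAlgebra.of K G (h : G)))) ≤ W := by
      rw [hW, Submodule.map_span]
      apply Submodule.span_le.mpr
      rintro y ⟨z, ⟨h', rfl⟩, rfl⟩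
      apply Submodule.subset_span
      exact ⟨h' * h, by simp [mul_assoc]⟩
    exact hmap ⟨w, hw, rfl⟩
  -- H acts on W
  letI act : MulAction ↥H ↥W := {
    smul := fun h w => ⟨w.1 * MonoidAlgebra.of K G ((h⁻¹ : H) : G), stable _ w.2 _⟩
    one_smul := fun w => by
      apply Subtype.ext
      show w.1 * MonoidAlgebra.of K G (((1⁻¹ : ↥H) : G)) = w.1
      rw [inv_one, OneMemClass.coe_one, MonoidAlgebra.of_apply, ← MonoidAlgebra.one_def, mul_one]
    mul_smul := fun h1 h2 w => by
      apply Subtype.ext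
      show w.1 * MonoidAlgebra.of K G (((h1*h2)⁻¹ : H) : G) =
        (w.1 * MonoidAlgebra.of K G ((h2⁻¹ : H) : G)) * MonoidAlgebra.of K G ((h1⁻¹ : H) : G)
      rw [mul_assoc, ← map_mul, mul_inv_rev]
      norm_cast }
  -- b ∈ W, so W is nontrivial, so p ∣ |W|
  have hbW : b ∈ W := by
    apply Submodule.subset_span
    refine ⟨1, ?_⟩
    show b * MonoidAlgebra.of K G ((1:G)) = b
    rw [MonoidAlgebra.of_apply, ← MonoidAlgebra.one_def, mul_one]
  haveI : Nontrivial ↥W := ⟨⟨⟨b, hbW⟩, 0, by simp [Subtype.ext_iff, hb]⟩⟩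
  have hcardW : p ∣ Nat.card ↥W := by
    haveI : Fintype ↥W := Fintype.ofFinite _
    rw [Nat.card_eq_fintype_card, Module.card_eq_pow_finrank (K := ZMod p) (V := ↥W), ZMod.card]
    exact dvd_pow_self p (Module.finrank_pos (R := ZMod p) (M := ↥W)).ne'
  -- fixed points
  have hmod := IsPGroup.card_modEq_card_fixedPoints (p := p) (G := ↥H) (α := ↥W) hp
  have hfixdvd : p ∣ Nat.card ↥(MulAction.fixedPoints ↥H ↥W) :=
    (Nat.modEq_zero_iff_dvd).mp (hmod.symm.trans (Nat.modEq_zero_iff_dvd.mpr hcardW))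
  have hzero_fixed : (⟨0, W.zero_mem⟩ : ↥W) ∈ MulAction.fixedPoints ↥H ↥W := by
    intro h
    apply Subtype.ext
    show (0 : A) * _ = 0
    rw [zero_mul]
  haveI : Finite ↥(MulAction.fixedPoints ↥H ↥W) := Subtype.finite
  have hpos : 0 < Nat.card ↥(MulAction.fixedPoints ↥H ↥W) := by
    rw [Nat.card_pos_iff]
    exact ⟨⟨⟨_, hzero_fixed⟩⟩, inferInstance⟩
  have hge : 1 < Nat.card ↥(MulAction.fixedPoints ↥H ↥W) :=
    lt_of_lt_of_le (Fact.out : p.Prime).one_lt (Nat.le_of_dvd hpos hfixdvd)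
  haveI : Nontrivial ↥(MulAction.fixedPoints ↥H ↥W) := Finite.one_lt_card_iff_nontrivial.mp hge
  obtain ⟨y, hy⟩ := exists_ne (⟨⟨0, W.zero_mem⟩, hzero_fixed⟩ :
    ↥(MulAction.fixedPoints ↥H ↥W))
  set w : A := (y.1 : A) with hwdef
  have hwne : w ≠ 0 := by
    intro h0
    apply hy
    apply Subtype.ext; apply Subtype.ext
    exact h0
  have hwfix : ∀ h : H, w * MonoidAlgebra.of K G (h : G) = w := by
    intro h
    have h2 := congrArg Subtype.val (y.2 h⁻¹)
    have h3 : ((h⁻¹ • (y.1 : ↥W) : ↥W) : A) = w * MonoidAlgebra.of K G ((h⁻¹⁻¹ : H) : G) := rfl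
    rw [h3, inv_inv] at h2
    exact h2
  obtain ⟨hwsupp, hxw⟩ := hQ w y.1.2
  -- w is a nonzero multiple of the H-sum
  obtain ⟨g₀, hg₀⟩ : ∃ g₀, w.coeff g₀ ≠ 0 := by
    by_contra hcon
    push_neg at hcon
    exact hwne (MonoidAlgebra.ext (Finsupp.ext hcon))
  have hg₀H : g₀ ∈ H := hwsupp g₀ hg₀
  set c : K := w.coeff g₀ with hc
  set tH : A := ∑ h : H, MonoidAlgebra.of K G (h : G) with htH
  have htHapply : ∀ g : G, tH.coeff g = if g ∈ H then (1:K) else 0 := by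
    intro g
    rw [htH, MonoidAlgebra.coeff_sum, Finsupp.finset_sum_apply]
    by_cases hgH : g ∈ H
    · rw [if_pos hgH]
      rw [Finset.sum_eq_single (⟨g, hgH⟩ : H)]
      · simp [MonoidAlgebra.of_apply, Finsupp.single_apply]
      · intro h _ hne
        simp only [MonoidAlgebra.of_apply, MonoidAlgebra.coeff_single, Finsupp.single_apply]
        rw [if_neg]
        intro hcoe
        exact hne (Subtype.ext hcoe)
      · intro h; exact absurd (Finset.mem_univ _) h
    · rw [if_neg hgH]
      apply Finset.sum_eq_zero
      intro h _
      simp only [MonoidAlgebra.of_apply, MonoidAlgebra.coeff_single, Finsupp.single_apply]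
      rw [if_neg]
      intro hcoe
      exact hgH (hcoe ▸ h.2)
  have hwconst : ∀ g, g ∈ H → w.coeff g = c := by
    intro g hgH
    have hη : g₀⁻¹ * g ∈ H := H.mul_mem (H.inv_mem hg₀H) hgH
    have := hwfix ⟨g₀⁻¹ * g, hη⟩
    have h3 := congrArg (fun z : A => z.coeff g) this
    simp only [MonoidAlgebra.of_apply, MonoidAlgebra.coeff_mul_single_apply, mul_one] at h3
    rw [show g * (g₀⁻¹ * g)⁻¹ = g₀ by group] at h3
    rw [← h3, hc]
  have hwc : w = c • tH := by
    apply MonoidAlgebra.ext; apply Finsupp.ext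
    intro g
    rw [MonoidAlgebra.coeff_smul_apply, htHapply g]
    by_cases hgH : g ∈ H
    · rw [if_pos hgH, smul_eq_mul, mul_one, hwconst g hgH]
    · rw [if_neg hgH, smul_eq_mul, mul_zero]
      by_contra hne
      exact hgH (hwsupp g hne)
  have hxtH : x * tH = 0 := by
    have h4 : x * w = c • (x * tH) := by rw [hwc, mul_smul_comm]
    rw [hxw] at h4
    have hcne : c ≠ 0 := hg₀
    rcases smul_eq_zero.mp h4.symm with h | h
    · exact absurd h hcne
    · exact h
  -- coefficientwise: coset sums of x vanish
  have hcoset : ∀ g : G, ∑ h : H, x.coeff (g * (h : G)) = 0 := by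
    intro g
    have h5 := congrArg (fun z : A => z.coeff g) hxtH
    simp only [htH, Finset.mul_sum, MonoidAlgebra.coeff_zero, MonoidAlgebra.coeff_sum, Finsupp.coe_zero, Pi.zero_apply] at h5
    rw [Finsupp.finset_sum_apply] at h5
    simp only [MonoidAlgebra.of_apply, MonoidAlgebra.coeff_mul_single_apply, mul_one] at h5
    rw [← h5]
    have := Equiv.sum_comp (Equiv.inv ↥H) (fun h : H => x.coeff (g * ((h : G))⁻¹))
    rw [← this]
    apply Finset.sum_congr rfl
    intro h _
    simp
  -- sum over cosets
  rw [eps_apply']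
  rw [← Equiv.sum_comp (cosetEquiv H) (fun g => x.coeff g)]
  rw [Fintype.sum_prod_type]
  apply Finset.sum_eq_zero
  intro q _
  exact hcoset q.out


end Setup

/-- In characteristic `p`, if the right ideal `C` is not self-orthogonal, then
`C * C = P ⊕ M` where `P` is a projective cover of the trivial `KG`-module
(the right ideal `K · ∑_g g`); in particular `|G|_p ≤ dim_K (C * C)`. -/
theorem stmt16 {K G : Type*} [Field K] [Group G] [Fintype G]
    (p : ℕ) [Fact p.Prime] [CharP K p]
    (C : Submodule (MonoidAlgebra K G)ᵐᵒᵖ (MonoidAlgebra K G))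
    (hno : ∃ c ∈ C, ∃ c' ∈ C, ∑ g : G, c.coeff g * c'.coeff g ≠ 0) :
    ∃ P M : Submodule (MonoidAlgebra K G)ᵐᵒᵖ (MonoidAlgebra K G),
      P ⊓ M = ⊥ ∧
      P ⊔ M = Submodule.span (MonoidAlgebra K G)ᵐᵒᵖ
        {x : MonoidAlgebra K G | ∃ a ∈ C, ∃ b ∈ C, x = schur a b} ∧
      Module.Projective (MonoidAlgebra K G)ᵐᵒᵖ ↥P ∧
      (∃ f : ↥P →ₗ[(MonoidAlgebra K G)ᵐᵒᵖ]
          ↥(Submodule.span (MonoidAlgebra K G)ᵐᵒᵖ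
            {∑ g : G, MonoidAlgebra.of K G g}),
        Function.Surjective f ∧
        ∀ N : Submodule (MonoidAlgebra K G)ᵐᵒᵖ ↥P,
          N ⊔ LinearMap.ker f = ⊤ → N = ⊤) ∧
      p ^ (Fintype.card G).factorization p ≤
        Set.finrank K ((Submodule.span (MonoidAlgebra K G)ᵐᵒᵖ
          {x : MonoidAlgebra K G | ∃ a ∈ C, ∃ b ∈ C, x = schur a b} :
            Submodule (MonoidAlgebra K G)ᵐᵒᵖ (MonoidAlgebra K G)) :
          Set (MonoidAlgebra K G)) := by
  classical
  set A' := MonoidAlgebra K G with hA'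
  set S : Submodule (MonoidAlgebra K G)ᵐᵒᵖ (MonoidAlgebra K G) :=
    Submodule.span (MonoidAlgebra K G)ᵐᵒᵖ
      {x : MonoidAlgebra K G | ∃ a ∈ C, ∃ b ∈ C, x = schur a b} with hS
  -- there is an element of S with augmentation 1
  obtain ⟨c, hc, c', hc', hsum⟩ := hno
  have hx0S : schur c c' ∈ S := Submodule.subset_span ⟨c, hc, c', hc', rfl⟩
  have hepsx0 : eps (schur c c') = ∑ g : G, c.coeff g * c'.coeff g := by
    rw [eps_apply']
    apply Finset.sum_congr rfl
    intro g _
    rfl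
  set x : MonoidAlgebra K G := (∑ g : G, c.coeff g * c'.coeff g)⁻¹ • schur c c' with hxdef
  have hxS : x ∈ S := ksmul_mem S _ hx0S
  have hepsx : eps x = 1 := by
    rw [hxdef, map_smul, hepsx0, smul_eq_mul, inv_mul_cancel₀ hsum]
  -- the minimal idempotent
  set D : Set (MonoidAlgebra K G) := {e | e * e = e ∧ e ∈ S ∧ eps e = 1} with hD
  set μ : MonoidAlgebra K G → ℕ := fun e =>
    Module.finrank K ((LinearMap.range (Lmul e)).restrictScalars K) with hμ
  have hDne : (μ '' D).Nonempty := by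
    obtain ⟨e, heN, hee, hecnt⟩ := exists_idem_aug S x hxS hepsx
    exact ⟨μ e, e, ⟨hee, heN, hecnt⟩, rfl⟩
  obtain ⟨f, hfD, hμf⟩ := Nat.sInf_mem hDne
  obtain ⟨hff, hfS, hεf⟩ := hfD
  have hmin : ∀ e ∈ D, sInf (μ '' D) ≤ μ e := fun e he => Nat.sInf_le ⟨e, he, rfl⟩
  set P : Submodule (MonoidAlgebra K G)ᵐᵒᵖ (MonoidAlgebra K G) :=
    LinearMap.range (Lmul f) with hP
  set M : Submodule (MonoidAlgebra K G)ᵐᵒᵖ (MonoidAlgebra K G) :=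
    S ⊓ LinearMap.ker (Lmul f) with hM
  have hPfix : ∀ z ∈ P, f * z = z := by
    rintro z ⟨v, rfl⟩
    show f * (f * v) = f * v
    rw [← mul_assoc, hff]
  have hPS : P ≤ S := by
    rintro z ⟨v, rfl⟩
    show f * v ∈ S
    have : f * v = op v • f := rfl
    rw [this]
    exact S.smul_mem _ hfS
  have hfP : f ∈ P := ⟨1, mul_one f⟩
  refine ⟨P, M, ?_, ?_, ?_, ?_, ?_⟩
  · -- P ⊓ M = ⊥
    apply (Submodule.eq_bot_iff _).mpr
    rintro z ⟨hzP, _, hzker⟩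
    have h1 : f * z = 0 := hzker
    rw [hPfix z hzP] at h1
    exact h1
  · -- P ⊔ M = S
    apply le_antisymm
    · exact sup_le hPS inf_le_left
    · intro s hs
      apply Submodule.mem_sup.mpr
      refine ⟨f * s, ⟨s, rfl⟩, s - f * s, ⟨Submodule.sub_mem S hs (hPS ⟨s, rfl⟩), ?_⟩, ?_⟩
      · show f * (s - f * s) = 0
        rw [mul_sub, ← mul_assoc, hff, sub_self]
      · rw [add_sub_cancel]
  · -- projectivity
    apply Module.Projective.of_split P.subtype
      ((Lmul f).codRestrict P (fun v => ⟨v, rfl⟩))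
    apply LinearMap.ext
    rintro ⟨z, hz⟩
    apply Subtype.ext
    show f * z = z
    exact hPfix z hz
  · -- the projective cover map
    have hT : ∀ w : ↥P, eps (w : MonoidAlgebra K G) • tG ∈
        Submodule.span (MonoidAlgebra K G)ᵐᵒᵖ {∑ g : G, MonoidAlgebra.of K G g} := by
      intro w
      apply ksmul_mem
      exact Submodule.mem_span_singleton_self _
    set F0 : ↥P →ₗ[(MonoidAlgebra K G)ᵐᵒᵖ] MonoidAlgebra K G :=
      { toFun := fun w => eps (w : MonoidAlgebra K G) • tG
        map_add' := fun v w => by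
          show eps ((v + w : ↥P) : MonoidAlgebra K G) • tG =
            eps (v : MonoidAlgebra K G) • tG + eps (w : MonoidAlgebra K G) • tG
          have hvw : ((v + w : ↥P) : MonoidAlgebra K G) =
            (v : MonoidAlgebra K G) + (w : MonoidAlgebra K G) := rfl
          rw [hvw, map_add, add_smul]
        map_smul' := fun r w => by
          show eps ((w : MonoidAlgebra K G) * unop r) • tG = r • (eps (w:MonoidAlgebra K G) • tG)
          have h2 : r • ((eps (w:MonoidAlgebra K G)) • tG) =
              ((eps (w:MonoidAlgebra K G)) • tG) * unop r := rfl
          rw [h2, smul_mul_assoc, tG_mul, map_mul, mul_smul, smul_comm] } with hF0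
    set F : ↥P →ₗ[(MonoidAlgebra K G)ᵐᵒᵖ]
        ↥(Submodule.span (MonoidAlgebra K G)ᵐᵒᵖ {∑ g : G, MonoidAlgebra.of K G g}) :=
      F0.codRestrict _ hT with hF
    refine ⟨F, ?_, ?_⟩
    · -- surjectivity
      rintro ⟨y, hy⟩
      rw [Submodule.mem_span_singleton] at hy
      obtain ⟨r, hr⟩ := hy
      have htg : (∑ g : G, MonoidAlgebra.of K G g) = (tG : MonoidAlgebra K G) := rfl
      rw [htg] at hr
      have h3 : r • (tG : MonoidAlgebra K G) = tG * unop r := rfl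
      refine ⟨⟨f * (eps (unop r) • (1:MonoidAlgebra K G)), ⟨_, rfl⟩⟩, ?_⟩
      apply Subtype.ext
      show eps (f * (eps (unop r) • (1:MonoidAlgebra K G))) • tG = y
      rw [map_mul, map_smul, map_one, hεf, one_mul, smul_eq_mul, mul_one]
      rw [← hr, h3, tG_mul]
    · -- superfluous kernel
      intro N hN
      by_contra hne
      set N' : Submodule (MonoidAlgebra K G)ᵐᵒᵖ (MonoidAlgebra K G) := N.map P.subtype with hN'
      have hN'le : N' ≤ P := by
        rintro _ ⟨n, hn, rfl⟩
        exact n.2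
      have hN'ne : N' ≠ P := by
        intro h
        apply hne
        apply Submodule.map_injective_of_injective
          (show Function.Injective ⇑P.subtype from Subtype.val_injective)
        rw [Submodule.map_subtype_top]
        exact h
      have hfmem : (⟨f, hfP⟩ : ↥P) ∈ N ⊔ LinearMap.ker F := hN ▸ Submodule.mem_top
      obtain ⟨n, hn, k, hk, hnk⟩ := Submodule.mem_sup.mp hfmem
      have hepsk : eps (k : MonoidAlgebra K G) = 0 := by
        have h4 : F0 k = 0 := by
          have := congrArg Subtype.val (LinearMap.mem_ker.mp hk)
          exact this
        have h5 : eps (k : MonoidAlgebra K G) • (tG : MonoidAlgebra K G) = 0 := h4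
        rcases smul_eq_zero.mp h5 with h | h
        · exact h
        · exact absurd h tG_ne_zero
      have hepsn : eps (n : MonoidAlgebra K G) = 1 := by
        have h6 := congrArg (fun z : ↥P => eps (z : MonoidAlgebra K G)) hnk
        simp only [Submodule.coe_add, map_add, hepsk, add_zero] at h6
        rw [h6]
        exact hεf
      obtain ⟨e, heN', hee, hεe⟩ := exists_idem_aug N' (n : MonoidAlgebra K G)
        ⟨n, hn, rfl⟩ hepsn
      have heD : e ∈ D := ⟨hee, hPS (hN'le heN'), hεe⟩
      have hrange_le : LinearMap.range (Lmul e) ≤ N' := by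
        rintro _ ⟨v, rfl⟩
        show e * v ∈ N'
        have : e * v = op v • e := rfl
        rw [this]
        exact N'.smul_mem _ heN'
      have h8 : Submodule.restrictScalars K (LinearMap.range (Lmul e)) ≤
          Submodule.restrictScalars K N' := fun z hz => hrange_le hz
      have h9 : Submodule.restrictScalars K N' < Submodule.restrictScalars K P := by
        refine lt_of_le_of_ne (fun z hz => hN'le hz) ?_
        intro hEq
        exact hN'ne (Submodule.restrictScalars_injective K _ _ hEq)
      have hlt : μ e < sInf (μ '' D) := by
        rw [← hμf]
        exact lt_of_le_of_lt (Submodule.finrank_mono h8)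
          (Submodule.finrank_lt_finrank_of_lt h9)
      exact absurd (hmin e heD) (not_le.mpr hlt)
  · -- dimension bound
    set Syl : Sylow p G := Classical.arbitrary _ with hSyl
    set H : Subgroup G := (Syl : Subgroup G) with hH
    set v : ↥H → MonoidAlgebra K G := fun h => f * MonoidAlgebra.of K G (h : G) with hv
    have hli : LinearIndependent K v := by
      rw [Fintype.linearIndependent_iff]
      intro cf hrel
      by_contra hcon
      push_neg at hcon
      obtain ⟨j, hj⟩ := hcon
      set b : MonoidAlgebra K G := ∑ h : ↥H, MonoidAlgebra.single (h : G) (cf h) with hb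
      have hfb : f * b = 0 := by
        rw [hb, Finset.mul_sum, ← hrel]
        apply Finset.sum_congr rfl
        intro h _
        rw [hv]
        show f * MonoidAlgebra.single (h : G) (cf h) =
          cf h • (f * MonoidAlgebra.single (h : G) 1)
        have h10 : MonoidAlgebra.single (h : G) (cf h) =
            cf h • MonoidAlgebra.single (h : G) (1:K) := by
          rw [MonoidAlgebra.smul_single, smul_eq_mul, mul_one]
        rw [h10, mul_smul_comm]
      have hbsupp : ∀ g : G, b.coeff g ≠ 0 → g ∈ H := by
        intro g hg
        rw [hb, MonoidAlgebra.coeff_sum, Finsupp.finset_sum_apply] at hg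
        by_contra hgH
        apply hg
        apply Finset.sum_eq_zero
        intro h _
        rw [MonoidAlgebra.coeff_single, Finsupp.single_apply, if_neg]
        intro hcoe
        exact hgH (hcoe ▸ h.2)
      have hbne : b ≠ 0 := by
        intro h0
        apply hj
        have h7 := congrArg (fun z : MonoidAlgebra K G => z.coeff (j : G)) h0
        simp only [hb, MonoidAlgebra.coeff_zero, MonoidAlgebra.coeff_sum, Finsupp.coe_zero, Pi.zero_apply] at h7
        rw [Finsupp.finset_sum_apply] at h7
        rw [Finset.sum_eq_single j] at h7
        · rwa [MonoidAlgebra.coeff_single, Finsupp.single_apply, if_pos rfl] at h7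
        · intro h _ hne
          rw [MonoidAlgebra.coeff_single, Finsupp.single_apply, if_neg]
          intro hcoe
          exact hne (Subtype.ext hcoe)
        · intro h; exact absurd (Finset.mem_univ _) h
      have := eps_eq_zero_of_kill p H Syl.isPGroup' f b hbsupp hfb hbne
      rw [hεf] at this
      exact one_ne_zero this
    have hsub : Set.range v ⊆ (S : Set (MonoidAlgebra K G)) := by
      rintro _ ⟨h, rfl⟩
      rw [hv]
      show f * MonoidAlgebra.of K G (h : G) ∈ S
      have : f * MonoidAlgebra.of K G (h : G) = op (MonoidAlgebra.of K G (h : G)) • f := rfl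
      rw [this]
      exact S.smul_mem _ hfS
    have hcard : Fintype.card ↥H = p ^ (Fintype.card G).factorization p := by
      have := Sylow.card_eq_multiplicity Syl
      rwa [Nat.card_eq_fintype_card, Nat.card_eq_fintype_card] at this
    calc p ^ (Fintype.card G).factorization p = Fintype.card ↥H := hcard.symm
      _ = Module.finrank K (Submodule.span K (Set.range v)) := (finrank_span_eq_card hli).symm
      _ ≤ Set.finrank K (S : Set (MonoidAlgebra K G)) := by
          apply Submodule.finrank_mono
          exact Submodule.span_mono hsub
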